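/- Let B = {ψᵢ¹ ⊗ ⋯ ⊗ ψᵢⁿ : i = 1…d} and C = {φⱼ¹ ⊗ ⋯ ⊗ φⱼⁿ : j = 1…d} be two orthonormal product bases of ℂ^{d₁} ⊗ ⋯ ⊗ ℂ^{d_n}, d = d₁⋯d_n, which are mutually unbiased (|⟨ψᵢ¹ ⊗ ⋯ ⊗ ψᵢⁿ, φⱼ¹ ⊗ ⋯ ⊗ φⱼⁿ⟩|² = 1/d for all i, j). Then for every r = 1…n and all i, j = 1…d, the factor vectors satisfy |⟨ψᵢʳ, φⱼʳ⟩|² = 1/d_r. -/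

import Mathlib

open scoped ComplexInnerProductSpace

/-- The tensor product `ψ¹ ⊗ ⋯ ⊗ ψⁿ` of `n` vectors, realized concretely on
`EuclideanSpace`: its component at the multi-index `f` is `∏ r, ψ r (f r)`. -/
noncomputable def eprodPi {n : ℕ} {D : Fin n → ℕ}
    (ψ : (r : Fin n) → EuclideanSpace ℂ (Fin (D r))) :
    EuclideanSpace ℂ ((r : Fin n) → Fin (D r)) :=
  WithLp.toLp 2 (fun f => ∏ r, ψ r (f r))

lemma inner_eprodPi {n : ℕ} {D : Fin n → ℕ}
    (ψ χ : (r : Fin n) → EuclideanSpace ℂ (Fin (D r))) :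
    ⟪eprodPi ψ, eprodPi χ⟫ = ∏ r, ⟪ψ r, χ r⟫ := by
  simp only [eprodPi, WithLp.ofLp_toLp, PiLp.inner_apply, RCLike.inner_apply, map_prod, ← Finset.prod_mul_distrib]
  rw [Fintype.prod_sum]

lemma inner_mul_inner_symm {E : Type*} [NormedAddCommGroup E] [InnerProductSpace ℂ E] (z w : E) :
    ⟪z,w⟫ * ⟪w,z⟫ = ((‖⟪z,w⟫‖:ℝ)^2 : ℂ) := by
  rw [← inner_conj_symm z w, RCLike.conj_mul, RCLike.norm_conj]
  norm_cast

lemma parseval {E ι : Type*} [NormedAddCommGroup E] [InnerProductSpace ℂ E]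
    [FiniteDimensional ℂ E] [Fintype ι] [Nonempty ι] {v : ι → E}
    (hv : Orthonormal ℂ v) (card_eq : Fintype.card ι = Module.finrank ℂ E) (x : E) :
    ∑ i, ‖⟪x, v i⟫‖ ^ 2 = ‖x‖ ^ 2 := by
  let b := (basisOfOrthonormalOfCardEqFinrank hv card_eq).toOrthonormalBasis
    (by rwa [coe_basisOfOrthonormalOfCardEqFinrank])
  have hb : ∀ i, b i = v i := fun i => by
    simp [b, Module.Basis.coe_toOrthonormalBasis, coe_basisOfOrthonormalOfCardEqFinrank]
  have h := b.sum_inner_mul_inner x x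
  simp only [hb, inner_mul_inner_symm, inner_self_eq_norm_sq_to_K] at h
  have h2 : ((∑ i, ‖⟪x, v i⟫‖ ^ 2 : ℝ) : ℂ) = ((‖x‖^2 : ℝ) : ℂ) := by push_cast; exact h
  exact_mod_cast h2

lemma norm_sq_inner_eprodPi {n : ℕ} {D : Fin n → ℕ}
    (ψ χ : (r : Fin n) → EuclideanSpace ℂ (Fin (D r))) :
    ‖⟪eprodPi ψ, eprodPi χ⟫‖ ^ 2 = ∏ r, ‖⟪ψ r, χ r⟫‖ ^ 2 := by
  rw [inner_eprodPi, norm_prod, ← Finset.prod_pow]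

lemma norm_sq_eprodPi {n : ℕ} {D : Fin n → ℕ}
    (χ : (r : Fin n) → EuclideanSpace ℂ (Fin (D r))) :
    ‖eprodPi χ‖ ^ 2 = ∏ r, ‖χ r‖ ^ 2 := by
  have h := inner_eprodPi χ χ
  simp only [inner_self_eq_norm_sq_to_K] at h
  have h2 : ((‖eprodPi χ‖ ^ 2 : ℝ) : ℂ) = ((∏ r, ‖χ r‖ ^ 2 : ℝ) : ℂ) := by push_cast; exact h
  exact_mod_cast h2

lemma sum_norm_sq_euclidean {m : ℕ} (v : EuclideanSpace ℂ (Fin m)) :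
    ∑ k, ‖v k‖ ^ 2 = ‖v‖ ^ 2 := by
  rw [EuclideanSpace.norm_eq, Real.sq_sqrt (by positivity)]

/-- If two orthonormal product bases `{ψᵢ¹ ⊗ ⋯ ⊗ ψᵢⁿ}` and `{φⱼ¹ ⊗ ⋯ ⊗ φⱼⁿ}` of
`ℂ^{d₁} ⊗ ⋯ ⊗ ℂ^{d_n}`, `d = d₁⋯d_n`, are mutually unbiased, then for every `r` and all
`i, j`, the factor vectors satisfy `|⟨ψᵢʳ, φⱼʳ⟩|² = 1/d_r`. -/
theorem MU_product_bases_factorwise_MU {n : ℕ} {D : Fin n → ℕ}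
    (hD : ∀ r, 2 ≤ D r)
    (ψ φ : Fin (∏ r, D r) → (r : Fin n) → EuclideanSpace ℂ (Fin (D r)))
    (hψ : ∀ i r, ‖ψ i r‖ = 1) (hφ : ∀ j r, ‖φ j r‖ = 1)
    (hBψ : Orthonormal ℂ (fun i => eprodPi (ψ i)))
    (hBφ : Orthonormal ℂ (fun j => eprodPi (φ j)))
    (hMU : ∀ i j, ‖⟪eprodPi (ψ i), eprodPi (φ j)⟫‖ ^ 2 = 1 / ((∏ r, D r : ℕ) : ℝ)) :
    ∀ r i j, ‖⟪ψ i r, φ j r⟫‖ ^ 2 = 1 / (D r : ℝ) := by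
  intro r i j₀
  classical
  have hDr : 0 < D r := lt_of_lt_of_le two_pos (hD r)
  have hd : 0 < ∏ s, D s := Finset.prod_pos fun s _ => lt_of_lt_of_le two_pos (hD s)
  have hdR : (0:ℝ) < ((∏ s, D s : ℕ) : ℝ) := by exact_mod_cast hd
  have hDrR : (0:ℝ) < (D r : ℝ) := by exact_mod_cast hDr
  haveI : Nonempty (Fin (∏ s, D s)) := ⟨⟨0, hd⟩⟩
  have card_eq : Fintype.card (Fin (∏ s, D s)) =
      Module.finrank ℂ (EuclideanSpace ℂ ((s : Fin n) → Fin (D s))) := by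
    simp [finrank_euclideanSpace, Fintype.card_pi]
  set y : Fin (∏ s, D s) → ℝ := fun j => ‖⟪ψ i r, φ j r⟫‖ ^ 2 with hy_def
  set c : Fin (∏ s, D s) → ℝ :=
    fun j => ∏ s ∈ Finset.univ.erase r, ‖⟪ψ i s, φ j s⟫‖ ^ 2 with hc_def
  have hynn : ∀ j, 0 ≤ y j := fun j => sq_nonneg _
  have hcnn : ∀ j, 0 ≤ c j := fun j => Finset.prod_nonneg fun s _ => sq_nonneg _
  have hA : ∀ j, y j * c j = 1 / ((∏ s, D s : ℕ) : ℝ) := by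
    intro j
    have h := hMU i j
    rw [norm_sq_inner_eprodPi,
      ← Finset.mul_prod_erase Finset.univ _ (Finset.mem_univ r)] at h
    exact h
  -- Fact B : ∑ c = D r
  have hB : ∑ j, c j = (D r : ℝ) := by
    have key : ∀ k : Fin (D r), ∑ j,
        ‖⟪eprodPi (Function.update (ψ i) r (EuclideanSpace.single k 1)), eprodPi (φ j)⟫‖ ^ 2
        = 1 := by
      intro k
      set W := eprodPi (Function.update (ψ i) r (EuclideanSpace.single k (1:ℂ))) with hW
      have hp : (∑ j, ‖⟪W, eprodPi (φ j)⟫‖ ^ 2) = ‖W‖ ^ 2 := parseval hBφ card_eq W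
      rw [hp, hW, norm_sq_eprodPi]
      apply Finset.prod_eq_one
      intro s _
      by_cases hs : s = r
      · subst hs; rw [Function.update_self, EuclideanSpace.norm_single]; norm_num
      · rw [Function.update_of_ne hs, hψ i s]; norm_num
    have expand : ∀ (k : Fin (D r)) (j : Fin (∏ s, D s)),
        ‖⟪eprodPi (Function.update (ψ i) r (EuclideanSpace.single k 1)), eprodPi (φ j)⟫‖ ^ 2
          = ‖φ j r k‖ ^ 2 * c j := by
      intro k j
      rw [norm_sq_inner_eprodPi,
        ← Finset.mul_prod_erase Finset.univ _ (Finset.mem_univ r)]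
      congr 1
      · rw [Function.update_self, EuclideanSpace.inner_single_left]; simp
      · apply Finset.prod_congr rfl
        intro s hs
        rw [Function.update_of_ne (Finset.ne_of_mem_erase hs)]
    have h1 : ∑ k : Fin (D r), ∑ j,
        ‖⟪eprodPi (Function.update (ψ i) r (EuclideanSpace.single k 1)), eprodPi (φ j)⟫‖ ^ 2
        = (D r : ℝ) := by
      rw [Finset.sum_congr rfl fun k _ => key k]; simp
    rw [Finset.sum_comm] at h1
    rw [← h1]
    apply Finset.sum_congr rfl
    intro j _
    rw [Finset.sum_congr rfl fun k _ => expand k j, ← Finset.sum_mul,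
      sum_norm_sq_euclidean, hφ j r]
    norm_num
  -- Fact C : ∑ y = d / D r
  have hC : ∑ j, y j = ((∏ s, D s : ℕ) : ℝ) / (D r : ℝ) := by
    have key : ∀ g : (s : Fin n) → Fin (D s), ∑ j,
        ‖⟪eprodPi (Function.update
            (fun s => (EuclideanSpace.single (g s) 1 : EuclideanSpace ℂ (Fin (D s)))) r (ψ i r)),
          eprodPi (φ j)⟫‖ ^ 2 = 1 := by
      intro g
      set W := eprodPi (Function.update
        (fun s => (EuclideanSpace.single (g s) 1 : EuclideanSpace ℂ (Fin (D s)))) r (ψ i r))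
        with hW
      have hp : (∑ j, ‖⟪W, eprodPi (φ j)⟫‖ ^ 2) = ‖W‖ ^ 2 := parseval hBφ card_eq W
      rw [hp, hW, norm_sq_eprodPi]
      apply Finset.prod_eq_one
      intro s _
      by_cases hs : s = r
      · subst hs; rw [Function.update_self, hψ i s]; norm_num
      · rw [Function.update_of_ne hs, EuclideanSpace.norm_single]; norm_num
    have expand : ∀ (g : (s : Fin n) → Fin (D s)) (j : Fin (∏ s, D s)),
        ‖⟪eprodPi (Function.update
            (fun s => (EuclideanSpace.single (g s) 1 : EuclideanSpace ℂ (Fin (D s)))) r (ψ i r)),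
          eprodPi (φ j)⟫‖ ^ 2
          = ∏ s, (if s = r then y j else ‖φ j s (g s)‖ ^ 2) := by
      intro g j
      rw [norm_sq_inner_eprodPi]
      refine Finset.prod_congr rfl fun s _ => ?_
      by_cases hs : s = r
      · subst hs
        rw [if_pos rfl, Function.update_self]
      · rw [if_neg hs, Function.update_of_ne hs, EuclideanSpace.inner_single_left]
        simp
    have swap : ∀ j, (∑ g : (s : Fin n) → Fin (D s),
        ∏ s, (if s = r then y j else ‖φ j s (g s)‖ ^ 2)) = (D r : ℝ) * y j := by
      intro j
      rw [← Fintype.prod_sum fun s (k : Fin (D s)) => if s = r then y j else ‖φ j s k‖ ^ 2]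
      rw [← Finset.mul_prod_erase Finset.univ _ (Finset.mem_univ r)]
      have e1 : (∑ k : Fin (D r), if r = r then y j else ‖φ j r k‖ ^ 2) = (D r : ℝ) * y j := by
        simp [Finset.sum_const, Finset.card_univ, mul_comm]
      have e2 : (∏ s ∈ Finset.univ.erase r,
          ∑ k : Fin (D s), if s = r then y j else ‖φ j s k‖ ^ 2) = 1 := by
        apply Finset.prod_eq_one
        intro s hs
        have hsr := Finset.ne_of_mem_erase hs
        simp only [if_neg hsr]
        rw [sum_norm_sq_euclidean, hφ j s]; norm_num
      rw [e1, e2, mul_one]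
    have h1 : (∑ g : (s : Fin n) → Fin (D s), ∑ j,
        ‖⟪eprodPi (Function.update
            (fun s => (EuclideanSpace.single (g s) 1 : EuclideanSpace ℂ (Fin (D s)))) r (ψ i r)),
          eprodPi (φ j)⟫‖ ^ 2) = ((∏ s, D s : ℕ) : ℝ) := by
      rw [Finset.sum_congr rfl fun g _ => key g, Finset.sum_const, Finset.card_univ,
        nsmul_eq_mul, mul_one]
      norm_num [Fintype.card_pi]
    rw [Finset.sum_comm] at h1
    have h2 : (D r : ℝ) * (∑ j, y j) = ((∏ s, D s : ℕ) : ℝ) := by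
      rw [Finset.mul_sum, ← h1]
      exact Finset.sum_congr rfl fun j _ =>
        (((Finset.sum_congr rfl fun g _ => expand g j).trans (swap j))).symm
    rw [eq_div_iff hDrR.ne']
    linarith [h2]
  -- positivity of y
  have hypos : ∀ j, 0 < y j := by
    intro j
    rcases (hynn j).lt_or_eq with h | h
    · exact h
    · exfalso
      have h' := hA j
      rw [← h, zero_mul] at h'
      have h'' : (1:ℝ) / ((∏ s, D s : ℕ) : ℝ) = 0 := h'.symm
      rw [div_eq_zero_iff] at h''
      rcases h'' with h' | h'
      · norm_num at h'
      · exact hdR.ne' h'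
  -- Cauchy-Schwarz equality argument
  have hzero : ∑ j, (Real.sqrt (D r) * Real.sqrt (y j)
      - Real.sqrt (((∏ s, D s : ℕ) : ℝ)/(D r : ℝ)) * Real.sqrt (c j)) ^ 2 = 0 := by
    have expand : ∀ j, (Real.sqrt (D r) * Real.sqrt (y j)
        - Real.sqrt (((∏ s, D s : ℕ) : ℝ)/(D r : ℝ)) * Real.sqrt (c j)) ^ 2
        = (D r : ℝ) * y j + (((∏ s, D s : ℕ) : ℝ)/(D r : ℝ)) * c j - 2 * (1:ℝ) := by
      intro j
      have h1 : (Real.sqrt (D r) * Real.sqrt (y j)) ^ 2 = (D r : ℝ) * y j := by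
        rw [mul_pow, Real.sq_sqrt hDrR.le, Real.sq_sqrt (hynn j)]
      have h2 : (Real.sqrt (((∏ s, D s : ℕ) : ℝ)/(D r : ℝ)) * Real.sqrt (c j)) ^ 2
          = (((∏ s, D s : ℕ) : ℝ)/(D r : ℝ)) * c j := by
        rw [mul_pow, Real.sq_sqrt (by positivity), Real.sq_sqrt (hcnn j)]
      have h3 : Real.sqrt (D r) * Real.sqrt (y j)
          * (Real.sqrt (((∏ s, D s : ℕ) : ℝ)/(D r : ℝ)) * Real.sqrt (c j)) = 1 := by
        have e1 : Real.sqrt (D r) * Real.sqrt (((∏ s, D s : ℕ) : ℝ)/(D r : ℝ))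
            = Real.sqrt ((∏ s, D s : ℕ) : ℝ) := by
          rw [← Real.sqrt_mul hDrR.le, mul_div_cancel₀ _ hDrR.ne']
        have e2 : Real.sqrt (y j) * Real.sqrt (c j)
            = Real.sqrt (1/((∏ s, D s : ℕ) : ℝ)) := by
          rw [← Real.sqrt_mul (hynn j), hA j]
        calc Real.sqrt (D r) * Real.sqrt (y j)
            * (Real.sqrt (((∏ s, D s : ℕ) : ℝ)/(D r : ℝ)) * Real.sqrt (c j))
            = (Real.sqrt (D r) * Real.sqrt (((∏ s, D s : ℕ) : ℝ)/(D r : ℝ)))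
              * (Real.sqrt (y j) * Real.sqrt (c j)) := by ring
          _ = Real.sqrt ((∏ s, D s : ℕ) : ℝ)
              * Real.sqrt (1/((∏ s, D s : ℕ) : ℝ)) := by rw [e1, e2]
          _ = Real.sqrt (((∏ s, D s : ℕ) : ℝ) * (1/((∏ s, D s : ℕ) : ℝ))) :=
              (Real.sqrt_mul hdR.le _).symm
          _ = 1 := by rw [mul_one_div, div_self hdR.ne']; exact Real.sqrt_one
      rw [sub_sq, h1, h2, mul_assoc, h3]
      ring
    rw [Finset.sum_congr rfl fun j _ => expand j]
    rw [Finset.sum_sub_distrib, Finset.sum_add_distrib, ← Finset.mul_sum, ← Finset.mul_sum,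
      hB, hC, Finset.sum_const, Finset.card_univ, Fintype.card_fin, nsmul_eq_mul,
      div_mul_cancel₀ _ hDrR.ne', mul_div_cancel₀ _ hDrR.ne']
    ring
  have heach := (Finset.sum_eq_zero_iff_of_nonneg fun j _ => sq_nonneg _).mp hzero j₀
    (Finset.mem_univ _)
  have heq : Real.sqrt (D r) * Real.sqrt (y j₀)
      = Real.sqrt (((∏ s, D s : ℕ) : ℝ)/(D r : ℝ)) * Real.sqrt (c j₀) := by
    have h := sq_eq_zero_iff.mp heach
    linarith [h]
  have hsq : (D r : ℝ) * y j₀ = (((∏ s, D s : ℕ) : ℝ)/(D r : ℝ)) * c j₀ := by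
    have h := congrArg (· ^ 2) heq
    simp only [mul_pow, Real.sq_sqrt hDrR.le, Real.sq_sqrt (hynn j₀),
      Real.sq_sqrt (hcnn j₀),
      Real.sq_sqrt (show (0:ℝ) ≤ ((∏ s, D s : ℕ) : ℝ)/(D r : ℝ) by positivity)] at h
    exact h
  have hkey : ((D r:ℝ) * y j₀) * ((D r:ℝ) * y j₀) = 1 := by
    calc ((D r:ℝ) * y j₀) * ((D r:ℝ) * y j₀)
        = ((((∏ s, D s : ℕ) : ℝ)/(D r : ℝ)) * c j₀) * ((D r:ℝ) * y j₀) := by rw [hsq]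
      _ = ((∏ s, D s : ℕ) : ℝ) * (y j₀ * c j₀) * ((D r:ℝ)/(D r:ℝ)) := by ring
      _ = 1 := by rw [hA j₀, div_self hDrR.ne', mul_one, mul_one_div, div_self hdR.ne']
  have hfin : (D r:ℝ) * y j₀ = 1 := by nlinarith [mul_pos hDrR (hypos j₀)]
  show y j₀ = 1 / (D r : ℝ)
  field_simp
  linarith [hfin]
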